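/- Let (M, φ, ξ_α, η^α, g) be a Lorentzian S-manifold of dimension 2n+s with s ≥ 2 and ξ_1 the timelike characteristic vector field. Fix p ∈ M and β ∈ {2,…,s}, and set u = ξ_1 + ξ_β at p. Then u is a null vector in N(ξ_1), and the Jacobi operator R̄_u on ū^⊥ vanishes identically. -/

import Mathlib

/-- A symmetric bilinear form on a real vector space is *Lorentzian* if it admits an
orthonormal basis with exactly one timelike vector. -/
def IsLorentzian {V : Type*} [AddCommGroup V] [Module ℝ V]
    (g : V →ₗ[ℝ] V →ₗ[ℝ] ℝ) : Prop :=
  ∃ (n : ℕ) (b : Module.Basis (Fin (n + 1)) ℝ V), ∀ i j,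
    g (b i) (b j) = if i = j then (if i = 0 then (-1 : ℝ) else 1) else 0

/-- On a Lorentzian `S`-manifold with `s = s₀ + 2 ≥ 2` characteristic vector fields
(the timelike one `ξ_1` indexed here by `0`), the vector `u = ξ_1 + ξ_β` (`β ≥ 2`) is
null, lies in the null congruence `N(ξ_1)`, and its Jacobi operator `R̄_u` on
`ū^⊥ = u^⊥/span(u)` vanishes identically (i.e. `R(x,u)u ∈ span(u)` for all `x ∈ u^⊥`).
Here `R13 z w y = R(z,w)y` and `R(X,Y,Z,W) = g(R(Z,W)Y,X)`. -/

private lemma nondeg_of_lorentzian {V : Type*} [AddCommGroup V] [Module ℝ V]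
    (g : V →ₗ[ℝ] V →ₗ[ℝ] ℝ) (hgL : IsLorentzian g) (v : V)
    (h : ∀ w, g w v = 0) : v = 0 := by
  obtain ⟨n, b, hb⟩ := hgL
  have hrepr : ∀ j, b.repr v j = 0 := by
    intro j
    have hv : v = ∑ i, b.repr v i • b i := (b.sum_repr v).symm
    have := h (b j)
    rw [hv] at this
    simp only [map_sum, map_smul, smul_eq_mul, hb] at this
    simp only [mul_ite, mul_one, mul_zero, Finset.sum_ite_eq', Finset.mem_univ, if_true] at this
    rcases eq_or_ne j (0 : Fin (n+1)) with hj | hj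
    · simpa [hj] using this
    · simpa [hj] using this
  have : b.repr v = 0 := by ext j; simp [hrepr j]
  simpa using congrArg b.repr.symm this

theorem jacobi_operator_vanishes_on_xi_sum
    {V : Type*} [AddCommGroup V] [Module ℝ V] [FiniteDimensional ℝ V]
    (g : V →ₗ[ℝ] V →ₗ[ℝ] ℝ) (hgsymm : ∀ x y, g x y = g y x)
    (hgL : IsLorentzian g)
    {s₀ : ℕ}
    (φ : V →ₗ[ℝ] V) (ξ : Fin (s₀ + 2) → V) (η : Fin (s₀ + 2) → V →ₗ[ℝ] ℝ)
    (ε : Fin (s₀ + 2) → ℝ)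
    (hphi2 : ∀ x, φ (φ x) = -x + ∑ α, η α x • ξ α)
    (hηξ : ∀ α β, η α (ξ β) = if α = β then 1 else 0)
    (hφξ : ∀ α, φ (ξ α) = 0) (hηφ : ∀ α x, η α (φ x) = 0)
    (hε0 : ε 0 = -1) (hεpos : ∀ α, α ≠ 0 → ε α = 1)
    (hgξξ : ∀ α β, g (ξ α) (ξ β) = if α = β then ε α else 0)
    (hgxi : ∀ α (x : V), g x (ξ α) = ε α * η α x)
    (hmetriccompat : ∀ x y, g (φ x) (φ y) = g x y - ∑ α, ε α * (η α x * η α y))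
    (R13 : V →ₗ[ℝ] V →ₗ[ℝ] V →ₗ[ℝ] V)
    -- curvature symmetries of `R(X,Y,Z,W) = g(R13 Z W Y, X)`
    (hpair : ∀ x y z w : V, g (R13 z w y) x = g (R13 x y w) z)
    (hanti1 : ∀ x y z w : V, g (R13 z w y) x = - g (R13 z w x) y)
    (hanti2 : ∀ x y z w : V, g (R13 z w y) x = - g (R13 w z y) x)
    (hbianchi : ∀ x y z w : V,
      g (R13 z w y) x + g (R13 x w z) y + g (R13 y w x) z = 0)
    -- curvature identities of the Lorentzian `S`-structure
    (hRIm : ∀ x y z : V, (∀ γ, η γ x = 0) → (∀ γ, η γ y = 0) → (∀ γ, η γ z = 0) →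
      ∀ α β,
        g (R13 z (ξ α) y) x = 0 ∧ g (R13 y (ξ β) (ξ α)) x = ε α * ε β * g x y)
    (hRξ : ∀ α β (y z : V),
      g (R13 (ξ α) z y) (ξ β) = ε β * ε α * g (φ y) (φ z))
    (hRξξ : ∀ α β γ (z : V), g (R13 (ξ α) z (ξ γ)) (ξ β) = 0)
    (β : Fin (s₀ + 2)) (hβ : β ≠ 0) :
    g (ξ 0 + ξ β) (ξ 0 + ξ β) = 0 ∧
    g (ξ 0 + ξ β) (ξ 0) = -1 ∧
    ∀ x : V, g x (ξ 0 + ξ β) = 0 →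
      R13 x (ξ 0 + ξ β) (ξ 0 + ξ β) ∈ Submodule.span ℝ {ξ 0 + ξ β} := by
  have hβ' : (0 : Fin (s₀ + 2)) ≠ β := Ne.symm hβ
  have hεβ : ε β = 1 := hεpos β hβ
  refine ⟨?_, ?_, ?_⟩
  · simp [map_add, hgξξ, hβ, hβ', hε0, hεβ]
  · simp [map_add, hgξξ, hβ, hβ', hε0, hεβ]
  · intro x hx
    -- we show the curvature vector is in fact zero
    have key : R13 x (ξ 0 + ξ β) (ξ 0 + ξ β) = 0 := by
      apply nondeg_of_lorentzian g hgL
      intro w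
      rw [hgsymm]
      -- imaginary parts of x and w
      set xI := x - ∑ γ, η γ x • ξ γ with hxI_def
      set wI := w - ∑ γ, η γ w • ξ γ with hwI_def
      have hIm : ∀ (y : V) γ, η γ (y - ∑ δ, η δ y • ξ δ) = 0 := by
        intro y γ
        simp [map_sub, map_sum, map_smul, hηξ, smul_eq_mul, mul_ite, mul_one, mul_zero,
          Finset.sum_ite_eq', Finset.mem_univ]
      have hxIm : ∀ γ, η γ xI = 0 := fun γ => hIm x γ
      have hwIm : ∀ γ, η γ wI = 0 := fun γ => hIm w γ
      have hxd : x = xI + ∑ γ, η γ x • ξ γ := by rw [hxI_def]; abel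
      have hwd : w = wI + ∑ γ, η γ w • ξ γ := by rw [hwI_def]; abel
      -- curvature with three ξ's vanishes against anything
      have FactA : ∀ (w' : V) γ α α', g (R13 (ξ γ) (ξ α) (ξ α')) w' = 0 := by
        intro w' γ α α'
        rw [hanti2 w' (ξ α') (ξ γ) (ξ α), hpair w' (ξ α') (ξ α) (ξ γ),
          hanti2 (ξ α) (ξ γ) w' (ξ α'), hRξξ α' α γ w']
        ring
      have FactB1 : ∀ α α' δ, g (R13 xI (ξ α) (ξ α')) (ξ δ) = 0 := by
        intro α α' δ
        rw [hpair (ξ δ) (ξ α') xI (ξ α), hanti1 xI (ξ α) (ξ δ) (ξ α'),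
          hRξ δ α xI (ξ α'), hφξ]
        simp
      have FactB2 : ∀ α α', g (R13 xI (ξ α) (ξ α')) wI = ε α' * ε α * g wI xI := by
        intro α α'
        exact (hRIm wI xI xI hwIm hxIm hxIm α' α).2
      -- the main term for a pair of ξ's
      have FactC : ∀ α α', g (R13 x (ξ α) (ξ α')) w = ε α' * ε α * g wI xI := by
        intro α α'
        have e1 : g (R13 x (ξ α) (ξ α')) w
            = g (R13 xI (ξ α) (ξ α')) w
              + ∑ γ, η γ x * g (R13 (ξ γ) (ξ α) (ξ α')) w := by
          conv_lhs => rw [hxd]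
          simp [map_add, map_sum, map_smul, LinearMap.add_apply, LinearMap.sum_apply,
            LinearMap.smul_apply, smul_eq_mul]
        have e2 : g (R13 xI (ξ α) (ξ α')) w
            = g (R13 xI (ξ α) (ξ α')) wI
              + ∑ δ, η δ w * g (R13 xI (ξ α) (ξ α')) (ξ δ) := by
          conv_lhs => rw [hwd]
          simp [map_add, map_sum, map_smul, smul_eq_mul]
        rw [e1, e2]
        simp [FactA, FactB1, FactB2]
      have expand : g (R13 x (ξ 0 + ξ β) (ξ 0 + ξ β)) w
          = g (R13 x (ξ 0) (ξ 0)) w + g (R13 x (ξ 0) (ξ β)) w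
            + g (R13 x (ξ β) (ξ 0)) w + g (R13 x (ξ β) (ξ β)) w := by
        simp [map_add, LinearMap.add_apply]
        ring
      rw [expand, FactC 0 0, FactC 0 β, FactC β 0, FactC β β, hε0, hεβ]
      ring
    rw [key]
    exact (Submodule.span ℝ {ξ 0 + ξ β}).zero_mem
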